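/- Let K be a complete non-archimedean valued field (possibly spherically complete) and t₁,...,tₙ, s₁,...,sₙ > 0. Equip Kⁿ with the norm ‖(a₁,...,aₙ)‖_t = max_i t_i|a_i|, and similarly with the s_i. Then (Kⁿ, ‖·‖_t) and (Kⁿ, ‖·‖_s) are isometrically isomorphic as K-normed spaces if and only if there exists a permutation σ of {1,...,n} such that t_i/s_{σ(i)} ∈ |K^×| for every i. -/

import Mathlib

open Finset

private lemma ciSup_equiv {ι ι' : Type*} (e : ι ≃ ι') (f : ι' → ℝ) :
    ⨆ i, f (e i) = ⨆ j, f j := by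
  rw [iSup, iSup, ← Function.Surjective.range_comp e.surjective f]
  rfl

private lemma sup_single {K : Type*} [NontriviallyNormedField K] {n : ℕ}
    (t : Fin n → ℝ) (ht : ∀ i, 0 < t i) (i : Fin n) (a : K) :
    (⨆ k, t k * ‖(Pi.single i a : Fin n → K) k‖) = t i * ‖a‖ := by
  haveI : Nonempty (Fin n) := ⟨i⟩
  apply le_antisymm
  · refine ciSup_le fun k => ?_
    rcases eq_or_ne k i with rfl | hk
    · simp
    · simp only [Pi.single_eq_of_ne hk, norm_zero, mul_zero]
      exact mul_nonneg (ht i).le (norm_nonneg a)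
  · have := le_ciSup (Finite.bddAbove_range fun k => t k * ‖(Pi.single i a : Fin n → K) k‖) i
    simpa using this

open scoped Classical in
private lemma count_le {K : Type*} [NontriviallyNormedField K] [IsUltrametricDist K]
    {n : ℕ} (t s : Fin n → ℝ) (ht : ∀ i, 0 < t i) (hs : ∀ i, 0 < s i)
    (T : (Fin n → K) ≃ₗ[K] (Fin n → K))
    (hT : ∀ v : Fin n → K, (⨆ i, s i * ‖T v i‖) = ⨆ i, t i * ‖v i‖)
    (r : ℝ) (hr : 0 < r) :
    (univ.filter fun i => ∃ a : K, a ≠ 0 ∧ ‖a‖ = r / t i).card ≤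
      (univ.filter fun j => ∃ a : K, a ≠ 0 ∧ ‖a‖ = r / s j).card := by
  by_contra hlt
  push_neg at hlt
  set A := univ.filter fun i : Fin n => ∃ a : K, a ≠ 0 ∧ ‖a‖ = r / t i with hAdef
  set B := univ.filter fun j : Fin n => ∃ a : K, a ≠ 0 ∧ ‖a‖ = r / s j with hBdef
  have hch : ∀ i : A, ∃ a : K, a ≠ 0 ∧ ‖a‖ = r / t i.1 := fun i => (mem_filter.mp i.2).2
  choose a ha0 har using hch
  set w : A → (Fin n → K) := fun i => Pi.single i.1 (a i) with hwdef
  set u : A → (Fin n → K) := fun i => T (w i) with hudef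
  have hwn : ∀ i : A, (⨆ k, t k * ‖w i k‖) = r := by
    intro i
    rw [hwdef]
    rw [sup_single t ht i.1 (a i), har, mul_comm, div_mul_eq_mul_div, mul_div_assoc,
      div_self (ht i.1).ne', mul_one]
  have hun : ∀ (i : A) (j : Fin n), s j * ‖u i j‖ ≤ r := by
    intro i j
    calc s j * ‖u i j‖ ≤ ⨆ j', s j' * ‖u i j'‖ :=
          le_ciSup (Finite.bddAbove_range fun j' => s j' * ‖u i j'‖) j
      _ = r := by rw [hudef, hT (w i), hwn i]
  -- linear dependence
  have hnli : ¬ LinearIndependent K (fun (i : A) => fun (j : B) => u i j.1) := by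
    intro hli
    have := hli.fintype_card_le_finrank
    rw [Module.finrank_fintype_fun_eq_card] at this
    simp only [Fintype.card_coe] at this
    omega
  obtain ⟨g, hg0, i1, hgi1⟩ := Fintype.not_linearIndependent_iff.mp hnli
  haveI : Nonempty A := ⟨i1⟩
  haveI : Nonempty (Fin n) := ⟨i1.1⟩
  obtain ⟨im, -, him⟩ := Finset.exists_max_image (univ : Finset A) (fun i => ‖g i‖) ⟨i1, mem_univ _⟩
  set M := ‖g im‖ with hMdef
  have hM : 0 < M := lt_of_lt_of_le (norm_pos_iff.mpr hgi1) (him i1 (mem_univ _))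
  set c : Fin n → K := ∑ i : A, g i • w i with hcdef
  -- value of c at im
  have hcim : c im.1 = g im * a im := by
    rw [hcdef]
    rw [Finset.sum_apply]
    rw [Finset.sum_eq_single im]
    · simp [hwdef]
    · intro i _ hne
      have : (im : Fin n) ≠ (i : Fin n) := fun h => hne (Subtype.coe_injective h.symm)
      show (g i • w i) im.1 = 0
      simp only [hwdef, Pi.smul_apply, Pi.single_eq_of_ne this, smul_zero]
    · intro h; exact absurd (mem_univ _) h
  have hrhs : r * M ≤ ⨆ k, t k * ‖c k‖ := by
    have h1 : t im.1 * ‖c im.1‖ = r * M := by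
      rw [hcim, norm_mul, har]
      have := (ht im.1).ne'
      field_simp
      ring
    calc r * M = t im.1 * ‖c im.1‖ := h1.symm
      _ ≤ ⨆ k, t k * ‖c k‖ := le_ciSup (f := fun k => t k * ‖c k‖) (Finite.bddAbove_range _) im.1
  -- T c
  have hTc : ∀ j, T c j = ∑ i : A, g i * u i j := by
    intro j
    rw [hcdef, map_sum]
    simp only [map_smul]
    rw [Finset.sum_apply]
    simp [hudef]
  have hlhs : ∀ j, s j * ‖T c j‖ < r * M := by
    intro j
    by_cases hj : j ∈ B
    · have h0 := congrFun hg0 ⟨j, hj⟩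
      rw [Finset.sum_apply] at h0
      simp only [Pi.smul_apply, smul_eq_mul] at h0
      rw [hTc j]
      rw [show (∑ i : A, g i * u i j) = 0 from h0]
      simpa using mul_pos hr hM
    · rw [hTc j]
      have key : ∀ i : A, ‖g i * u i j‖ < (r * M) / s j := by
        intro i
        rw [lt_div_iff₀ (hs j)]
        rcases eq_or_ne (g i) 0 with h | hgne
        · rw [h, zero_mul, norm_zero, zero_mul]; exact mul_pos hr hM
        rcases eq_or_ne (u i j) 0 with h | hune
        · rw [h, mul_zero, norm_zero, zero_mul]; exact mul_pos hr hM
        have h1 : s j * ‖u i j‖ < r := by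
          refine lt_of_le_of_ne (hun i j) fun heq => hj ?_
          rw [hBdef, mem_filter]
          exact ⟨mem_univ _, ⟨u i j, hune, by
            rw [eq_div_iff (hs j).ne', mul_comm]; exact heq⟩⟩
        have h2 : ‖g i‖ ≤ M := him i (mem_univ _)
        have h3 : 0 < ‖g i‖ := norm_pos_iff.mpr hgne
        calc ‖g i * u i j‖ * s j = ‖g i‖ * (s j * ‖u i j‖) := by rw [norm_mul]; ring
          _ < ‖g i‖ * r := by exact mul_lt_mul_of_pos_left h1 h3
          _ ≤ M * r := mul_le_mul_of_nonneg_right h2 hr.le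
          _ = r * M := mul_comm _ _
      have hsum : ‖∑ i : A, g i * u i j‖ < (r * M) / s j := by
        refine lt_of_le_of_lt (Finset.Nonempty.norm_sum_le_sup'_norm univ_nonempty
          fun i => g i * u i j) ?_
        exact (Finset.sup'_lt_iff univ_nonempty).mpr fun i _ => key i
      rw [mul_comm]
      exact (lt_div_iff₀ (hs j)).mp hsum
  have hfin : (⨆ j, s j * ‖T c j‖) < r * M := by
    rw [← Finset.sup'_univ_eq_ciSup]
    exact (Finset.sup'_lt_iff univ_nonempty).mpr fun j _ => hlhs j
  rw [hT c] at hfin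
  linarith

open scoped Classical in
private lemma perm_of_counts {n : ℕ} (t s : Fin n → ℝ) (ht : ∀ i, 0 < t i) (hs : ∀ i, 0 < s i)
    (P : ℝ → Prop) (Pone : P 1) (Pmul : ∀ x y, P x → P y → P (x * y))
    (Pinv : ∀ x, P x → P x⁻¹)
    (hcount : ∀ r, 0 < r →
      (univ.filter fun i => P (r / t i)).card = (univ.filter fun j => P (r / s j)).card) :
    ∃ σ : Equiv.Perm (Fin n), ∀ i, P (t i / s (σ i)) := by
  letI st : Setoid ℝ :=
    ⟨fun x y => x = y ∨ (0 < x ∧ 0 < y ∧ P (x / y)), by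
      refine ⟨fun x => Or.inl rfl, ?_, ?_⟩
      · rintro x y (rfl | ⟨hx, hy, h⟩)
        · exact Or.inl rfl
        · exact Or.inr ⟨hy, hx, by rw [← inv_div]; exact Pinv _ h⟩
      · rintro x y z (rfl | ⟨hx, hy, h⟩) (rfl | ⟨hy', hz, h'⟩)
        · exact Or.inl rfl
        · exact Or.inr ⟨hy', hz, h'⟩
        · exact Or.inr ⟨hx, hy, h⟩
        · refine Or.inr ⟨hx, hz, ?_⟩
          have := Pmul _ _ h h'
          rwa [div_mul_div_cancel₀] at this
          exact hy.ne'⟩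
  have keyiff : ∀ x y : ℝ, 0 < x → 0 < y → ((⟦x⟧ : Quotient st) = ⟦y⟧ ↔ P (x / y)) := by
    intro x y hx hy
    rw [Quotient.eq]
    constructor
    · rintro (rfl | ⟨-, -, h⟩)
      · rw [div_self hx.ne']; exact Pone
      · exact h
    · intro h; exact Or.inr ⟨hx, hy, h⟩
  -- Hall's condition
  have hall : ∀ S : Finset (Fin n),
      S.card ≤ ({j | ∃ i ∈ S, (⟦t i⟧ : Quotient st) = ⟦s j⟧} : Finset (Fin n)).card := by
    intro S
    set cls : Finset (Quotient st) := S.image fun i => (⟦t i⟧ : Quotient st) with hcls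
    have h1 : S ⊆ cls.biUnion fun c => univ.filter fun i => (⟦t i⟧ : Quotient st) = c := by
      intro i hi
      rw [mem_biUnion]
      exact ⟨⟦t i⟧, mem_image_of_mem _ hi, mem_filter.mpr ⟨mem_univ _, rfl⟩⟩
    have h2 : ({j | ∃ i ∈ S, (⟦t i⟧ : Quotient st) = ⟦s j⟧} : Finset (Fin n)) =
        cls.biUnion fun c => univ.filter fun j => (⟦s j⟧ : Quotient st) = c := by
      ext j
      simp only [mem_filter, mem_univ, true_and, mem_biUnion, hcls, mem_image]
      constructor
      · rintro ⟨i, hi, h⟩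
        exact ⟨⟦t i⟧, ⟨i, hi, rfl⟩, h.symm⟩
      · rintro ⟨c, ⟨i, hi, rfl⟩, h⟩
        exact ⟨i, hi, h.symm⟩
    have hdisjt : (cls : Set (Quotient st)).PairwiseDisjoint
        fun c => univ.filter fun i => (⟦t i⟧ : Quotient st) = c := by
      rintro c1 - c2 - hne
      simp only [Finset.disjoint_left, mem_filter]
      rintro x ⟨-, rfl⟩ ⟨-, h2⟩
      exact hne h2
    have hdisjs : (cls : Set (Quotient st)).PairwiseDisjoint
        fun c => univ.filter fun j => (⟦s j⟧ : Quotient st) = c := by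
      rintro c1 - c2 - hne
      simp only [Finset.disjoint_left, mem_filter]
      rintro x ⟨-, rfl⟩ ⟨-, h2⟩
      exact hne h2
    have hcount' : ∀ c ∈ cls,
        (univ.filter fun i => (⟦t i⟧ : Quotient st) = c).card =
          (univ.filter fun j => (⟦s j⟧ : Quotient st) = c).card := by
      intro c hc
      rw [hcls, mem_image] at hc
      obtain ⟨i0, -, rfl⟩ := hc
      have e1 : (univ.filter fun i => (⟦t i⟧ : Quotient st) = ⟦t i0⟧) =
          univ.filter fun i => P (t i0 / t i) := by
        ext i
        simp only [mem_filter, mem_univ, true_and]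
        rw [eq_comm]; exact keyiff _ _ (ht i0) (ht i)
      have e2 : (univ.filter fun j => (⟦s j⟧ : Quotient st) = ⟦t i0⟧) =
          univ.filter fun j => P (t i0 / s j) := by
        ext j
        simp only [mem_filter, mem_univ, true_and]
        rw [eq_comm]; exact keyiff _ _ (ht i0) (hs j)
      rw [e1, e2]
      exact hcount (t i0) (ht i0)
    calc S.card ≤ (cls.biUnion fun c => univ.filter fun i =>
          (⟦t i⟧ : Quotient st) = c).card := Finset.card_le_card h1
      _ = ∑ c ∈ cls, (univ.filter fun i => (⟦t i⟧ : Quotient st) = c).card :=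
          Finset.card_biUnion hdisjt
      _ = ∑ c ∈ cls, (univ.filter fun j => (⟦s j⟧ : Quotient st) = c).card :=
          Finset.sum_congr rfl hcount'
      _ = (cls.biUnion fun c => univ.filter fun j => (⟦s j⟧ : Quotient st) = c).card :=
          (Finset.card_biUnion hdisjs).symm
      _ = _ := by rw [h2]
  obtain ⟨f, hinj, hf⟩ := (Fintype.all_card_le_filter_rel_iff_exists_injective
    (fun i j => (⟦t i⟧ : Quotient st) = ⟦s j⟧)).mp (by convert hall)
  refine ⟨Equiv.ofBijective f ((Finite.injective_iff_bijective).mp hinj), fun i => ?_⟩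
  exact (keyiff _ _ (ht i) (hs _)).mp (hf i)

theorem stmt10 {K : Type*} [NontriviallyNormedField K] [CompleteSpace K]
    [IsUltrametricDist K] (n : ℕ) (t s : Fin n → ℝ)
    (ht : ∀ i, 0 < t i) (hs : ∀ i, 0 < s i) :
    (∃ T : (Fin n → K) ≃ₗ[K] (Fin n → K),
        ∀ v : Fin n → K, (⨆ i, s i * ‖T v i‖) = ⨆ i, t i * ‖v i‖) ↔
      ∃ σ : Equiv.Perm (Fin n), ∀ i, ∃ a : K, a ≠ 0 ∧ ‖a‖ = t i / s (σ i) := by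
  constructor
  · rintro ⟨T, hT⟩
    have hT' : ∀ v : Fin n → K, (⨆ i, t i * ‖T.symm v i‖) = ⨆ i, s i * ‖v i‖ := by
      intro v
      have := hT (T.symm v)
      rw [T.apply_symm_apply] at this
      exact this.symm
    exact perm_of_counts t s ht hs (fun x => ∃ a : K, a ≠ 0 ∧ ‖a‖ = x)
      ⟨1, one_ne_zero, norm_one⟩
      (fun x y ⟨a, ha, hax⟩ ⟨b, hb, hbx⟩ =>
        ⟨a * b, mul_ne_zero ha hb, by rw [norm_mul, hax, hbx]⟩)
      (fun x ⟨a, ha, hax⟩ => ⟨a⁻¹, inv_ne_zero ha, by rw [norm_inv, hax]⟩)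
      (fun r hr => le_antisymm (count_le t s ht hs T hT r hr)
        (count_le s t hs ht T.symm hT' r hr))
  · rintro ⟨σ, hσ⟩
    choose a ha0 har using hσ
    refine ⟨{ toFun := fun v j => a (σ.symm j) * v (σ.symm j)
              invFun := fun w i => (a i)⁻¹ * w (σ i)
              map_add' := by intro v w; funext j; simp [mul_add]
              map_smul' := by intro c v; funext j; simp; ring
              left_inv := by
                intro v; funext i
                simp only [Equiv.symm_apply_apply]
                exact inv_mul_cancel_left₀ (ha0 i) _
              right_inv := by
                intro v; funext j
                simp only [Equiv.apply_symm_apply]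
                exact mul_inv_cancel_left₀ (ha0 _) _ }, ?_⟩
    intro v
    have hpt : ∀ i, s (σ i) * ‖a i * v i‖ = t i * ‖v i‖ := by
      intro i
      rw [norm_mul, har i, ← mul_assoc, mul_div_cancel₀ _ (hs (σ i)).ne']
    have : ∀ j, s j * ‖a (σ.symm j) * v (σ.symm j)‖ =
        (fun i => t i * ‖v i‖) (σ.symm j) := by
      intro j
      have := hpt (σ.symm j)
      rwa [Equiv.apply_symm_apply] at this
    calc (⨆ j, s j * ‖a (σ.symm j) * v (σ.symm j)‖)
        = ⨆ j, (fun i => t i * ‖v i‖) (σ.symm j) := by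
          congr 1; funext j; exact this j
      _ = ⨆ i, t i * ‖v i‖ := ciSup_equiv σ.symm (fun i => t i * ‖v i‖)
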